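/- Let f: [0,1] → ℝ be càdlàg with f(0)=0 and let 0 ≤ t < t′. Define g(s) = f(s) - t·s and g′(s) = f(s) - t′·s, and let L(t) denote the closure of the set {s ∈ [0,1] : g(s) = inf_{u∈[0,s]} g(u)} (and similarly L(t′) for g′). Then L(t) ⊆ L(t′). -/

import Mathlib

open Set Function Filter Topology

private lemma bdd_aux (f : ℝ → ℝ)
    (hrc : ∀ s ∈ Ico (0:ℝ) 1, ContinuousWithinAt f (Ici s) s)
    (hll : ∀ s ∈ Ioc (0:ℝ) 1, ∃ l, Tendsto f (𝓝[<] s) (𝓝 l)) :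
    BddBelow (f '' Icc 0 1) := by
  have hK : IsCompact (Icc (0:ℝ) 1) := isCompact_Icc
  refine hK.induction_on (by simp) (fun s t hst hp => hp.mono (image_mono hst))
    (fun s t hs ht => by rw [image_union]; exact hs.union ht) ?_
  intro x hx
  have hA : ∃ V ∈ 𝓝[Ici x] x, ∃ b, ∀ u ∈ V ∩ Icc (0:ℝ) 1, b ≤ f u := by
    rcases eq_or_lt_of_le hx.2 with h1 | h1
    · refine ⟨Ici x, self_mem_nhdsWithin, f 1, fun u hu => ?_⟩
      have : u = 1 := le_antisymm hu.2.2 (h1 ▸ hu.1)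
      rw [this]
    · have hcw := hrc x ⟨hx.1, h1⟩
      have hev : ∀ᶠ u in 𝓝[Ici x] x, f x - 1 ≤ f u :=
        hcw.eventually (eventually_ge_nhds (by linarith))
      exact ⟨{u | f x - 1 ≤ f u}, hev, f x - 1, fun u hu => hu.1⟩
  have hB : ∃ V ∈ 𝓝[Iio x] x, ∃ b, ∀ u ∈ V ∩ Icc (0:ℝ) 1, b ≤ f u := by
    rcases eq_or_lt_of_le hx.1 with h0 | h0
    · refine ⟨Iio x, self_mem_nhdsWithin, 0, fun u hu => ?_⟩
      exact absurd (h0 ▸ hu.2.1) (not_le.2 hu.1)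
    · obtain ⟨l, hl⟩ := hll x ⟨h0, hx.2⟩
      have hev : ∀ᶠ u in 𝓝[Iio x] x, l - 1 ≤ f u :=
        hl.eventually (eventually_ge_nhds (by linarith))
      exact ⟨{u | l - 1 ≤ f u}, hev, l - 1, fun u hu => hu.1⟩
  obtain ⟨Vr, hVr, br, hbr⟩ := hA
  obtain ⟨Vl, hVl, bl, hbl⟩ := hB
  have hmem : Vl ∪ Vr ∈ 𝓝 x := by
    rw [← nhdsWithin_univ, ← Iio_union_Ici (a := x), nhdsWithin_union]
    exact mem_sup.2 ⟨mem_of_superset hVl subset_union_left,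
      mem_of_superset hVr subset_union_right⟩
  refine ⟨(Vl ∪ Vr) ∩ Icc 0 1, inter_mem (mem_nhdsWithin_of_mem_nhds hmem)
    self_mem_nhdsWithin, min bl br, ?_⟩
  rintro y ⟨u, ⟨hu1, hu2⟩, rfl⟩
  rcases hu1 with h | h
  · exact le_trans (min_le_left _ _) (hbl u ⟨h, hu2⟩)
  · exact le_trans (min_le_right _ _) (hbr u ⟨h, hu2⟩)

/-- For càdlàg `f : [0,1] → ℝ` with `f 0 = 0` and drifts `0 ≤ t < t'`,
the ladder time set of `s ↦ f s - t s` is contained in that of `s ↦ f s - t' s`. -/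
theorem stmt_2 (f : ℝ → ℝ)
    (hrc : ∀ s ∈ Ico (0:ℝ) 1, ContinuousWithinAt f (Ici s) s)
    (hll : ∀ s ∈ Ioc (0:ℝ) 1, ∃ l, Tendsto f (𝓝[<] s) (𝓝 l))
    (h0 : f 0 = 0)
    (t t' : ℝ) (ht : 0 ≤ t) (htt' : t < t') :
    closure {s ∈ Icc (0:ℝ) 1 |
        f s - t * s = sInf ((fun u => f u - t * u) '' Icc 0 s)} ⊆
      closure {s ∈ Icc (0:ℝ) 1 |
        f s - t' * s = sInf ((fun u => f u - t' * u) '' Icc 0 s)} := by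
  apply closure_mono
  obtain ⟨b, hb⟩ := bdd_aux f hrc hll
  have hbd : ∀ u ∈ Icc (0:ℝ) 1, b ≤ f u := fun u hu => hb ⟨u, hu, rfl⟩
  rintro s ⟨hs, heq⟩
  have hs0 : (0:ℝ) ≤ s := hs.1
  have hs1 : s ≤ 1 := hs.2
  -- boundedness of both drifted images
  have key : ∀ c : ℝ, 0 ≤ c → BddBelow ((fun u => f u - c * u) '' Icc 0 s) := by
    intro c hc
    refine ⟨b - c, ?_⟩
    rintro y ⟨u, ⟨hu0, hus⟩, rfl⟩
    have hu1 : u ≤ 1 := le_trans hus hs1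
    have : c * u ≤ c := by nlinarith
    have := hbd u ⟨hu0, hu1⟩
    simp only
    linarith
  have hbt := key t ht
  have hbt' := key t' (le_of_lt (lt_of_le_of_lt ht htt'))
  have hmemself : ∀ c : ℝ, (f s - c * s) ∈ (fun u => f u - c * u) '' Icc 0 s :=
    fun c => ⟨s, ⟨hs0, le_refl s⟩, rfl⟩
  -- g s ≤ g u for u ∈ [0,s]
  have hglb : ∀ u ∈ Icc (0:ℝ) s, f s - t * s ≤ f u - t * u := by
    intro u hu
    rw [heq]
    exact csInf_le hbt ⟨u, hu, rfl⟩
  refine ⟨hs, le_antisymm ?_ (csInf_le hbt' (hmemself t'))⟩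
  refine le_csInf ⟨_, hmemself t'⟩ ?_
  rintro y ⟨u, hu, rfl⟩
  have h1 := hglb u hu
  have h2 : (t' - t) * u ≤ (t' - t) * s :=
    mul_le_mul_of_nonneg_left hu.2 (by linarith)
  simp only
  nlinarith
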